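/- Let μ > 0. The sequence of functions (a_{n+1})_n converges uniformly on [0,1] to the identity function e_1(x) = x, i.e., sup_{x ∈ [0,1]} |a_{n+1}(x) − x| → 0 as n → +∞. -/

import Mathlib

open MeasureTheory Filter Set

/-- The logarithmic weight `ln_μ(x) = ln(1+μ+x)`. -/
noncomputable def lnMu (μ x : ℝ) : ℝ := Real.log (1 + μ + x)

/-- The function `a_{n+1}(x)` from the paper. -/
noncomputable def aFun (μ : ℝ) (n : ℕ) (x : ℝ) : ℝ :=
  Real.log (1 + x / (((n : ℝ) + 1) * (1 + μ))) /
    Real.log (1 + 1 / (((n : ℝ) + 1) * (1 + μ)))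

/-- Bernstein basis polynomial `p_{n,k}(x) = C(n,k) x^k (1-x)^{n-k}`. -/
noncomputable def bern (n k : ℕ) (x : ℝ) : ℝ :=
  (n.choose k : ℝ) * x ^ k * (1 - x) ^ (n - k)

/-- The Kantorovich logarithmic operator `𝓛ₙᴷ(f,x)`. -/
noncomputable def LK (μ : ℝ) (n : ℕ) (f : ℝ → ℝ) (x : ℝ) : ℝ :=
  lnMu μ x * ∑ k ∈ Finset.range (n + 1),
    bern n k (aFun μ n x) * ((n : ℝ) + 1) *
      ∫ t in ((k : ℝ) / ((n : ℝ) + 1))..(((k : ℝ) + 1) / ((n : ℝ) + 1)), f t / lnMu μ t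

/-- `γ_n := max_{x ∈ [0,1]} |a_{n+1}(x) - x|`. -/
noncomputable def gammaN (μ : ℝ) (n : ℕ) : ℝ :=
  ⨆ x : Set.Icc (0 : ℝ) 1, |aFun μ n (x : ℝ) - (x : ℝ)|

/-- Unweighted L^p norm `(∫₀¹ |f|^p)^(1/p)` on [0,1]. -/
noncomputable def normP (p : ℝ) (f : ℝ → ℝ) : ℝ :=
  (∫ x in (0:ℝ)..1, |f x| ^ p) ^ (1 / p)

/-- Weighted L^p norm `(∫₀¹ |f/ln_μ|^p)^(1/p)` on [0,1]. -/
noncomputable def normPMu (μ p : ℝ) (f : ℝ → ℝ) : ℝ :=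
  (∫ x in (0:ℝ)..1, |f x / lnMu μ x| ^ p) ^ (1 / p)

lemma aFun_aux (μ : ℝ) (hμ : 0 < μ) (n : ℕ) {x : ℝ} (hx : x ∈ Icc (0:ℝ) 1) :
    |aFun μ n x - x| ≤ 1 / ((n:ℝ) + 1) := by
  obtain ⟨hx0, hx1⟩ := hx
  set c : ℝ := ((n : ℝ) + 1) * (1 + μ) with hc
  have hn1 : (0:ℝ) < (n:ℝ) + 1 := by positivity
  have hc1 : (1:ℝ) ≤ c := by
    have : (1:ℝ) ≤ (n:ℝ) + 1 := by linarith [Nat.cast_nonneg (α := ℝ) n]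
    nlinarith
  have hcpos : (0:ℝ) < c := by linarith
  have hL : 0 < Real.log (1 + 1 / c) := by
    refine Real.log_pos ?_
    have : 0 < 1 / c := by positivity
    linarith
  set L : ℝ := Real.log (1 + 1 / c) with hLdef
  -- lower bound: aFun ≥ x via concavity
  have hconc := strictConcaveOn_log_Ioi.concaveOn
  have hlow : x * L ≤ Real.log (1 + x / c) := by
    have h1 : (1:ℝ) ∈ Ioi (0:ℝ) := by norm_num
    have h2 : (1 + 1 / c) ∈ Ioi (0:ℝ) := by
      simp only [mem_Ioi]; positivity
    have := hconc.2 h1 h2 (show (0:ℝ) ≤ 1 - x by linarith) hx0 (show (1:ℝ) - x + x = 1 by ring)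
    simp only [smul_eq_mul, Real.log_one] at this
    have heq : (1 - x) * 1 + x * (1 + 1 / c) = 1 + x / c := by ring
    rw [heq] at this
    linarith [this]
  have haux_ge : x ≤ aFun μ n x := by
    rw [aFun]
    rw [le_div_iff₀ hL]
    exact hlow
  -- upper bound
  have hup1 : Real.log (1 + x / c) ≤ x / c := by
    have := Real.log_le_sub_one_of_pos (x := 1 + x / c) (by positivity)
    linarith
  have hup2 : (1 / c) / (1 + 1 / c) ≤ L := by
    have := Real.one_sub_inv_le_log_of_pos (x := 1 + 1 / c) (by positivity)
    have h3 : 1 - (1 + 1/c)⁻¹ = (1/c) / (1 + 1/c) := by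
      field_simp
      ring
    linarith [h3 ▸ this]
  have hub : aFun μ n x ≤ x * (1 + 1 / c) := by
    rw [aFun, div_le_iff₀ hL]
    calc Real.log (1 + x / c) ≤ x / c := hup1
      _ = (x * (1 + 1/c)) * ((1/c) / (1 + 1/c)) := by field_simp
      _ ≤ (x * (1 + 1/c)) * L := by
          apply mul_le_mul_of_nonneg_left hup2; positivity
  have h1c : 1 / c ≤ 1 / ((n:ℝ) + 1) := by
    apply one_div_le_one_div_of_le hn1
    nlinarith
  rw [abs_of_nonneg (by linarith)]
  have : aFun μ n x - x ≤ x * (1/c) := by nlinarith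
  calc aFun μ n x - x ≤ x * (1/c) := this
    _ ≤ 1 / c := by nlinarith [one_div_pos.mpr hcpos]
    _ ≤ _ := h1c

theorem stmt1 (μ : ℝ) (hμ : 0 < μ) :
    Tendsto (fun n : ℕ => ⨆ x : Set.Icc (0:ℝ) 1, |aFun μ n (x : ℝ) - (x : ℝ)|)
      atTop (nhds 0) := by
  have hbdd : ∀ n : ℕ, BddAbove (Set.range fun x : Set.Icc (0:ℝ) 1 =>
      |aFun μ n (x : ℝ) - (x : ℝ)|) := by
    intro n
    refine ⟨1 / ((n:ℝ) + 1), ?_⟩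
    rintro y ⟨x, rfl⟩
    exact aFun_aux μ hμ n x.2
  have hle : ∀ n : ℕ, (⨆ x : Set.Icc (0:ℝ) 1, |aFun μ n (x : ℝ) - (x : ℝ)|)
      ≤ 1 / ((n:ℝ) + 1) := fun n =>
    ciSup_le fun x => aFun_aux μ hμ n x.2
  have h0 : ∀ n : ℕ, 0 ≤ ⨆ x : Set.Icc (0:ℝ) 1, |aFun μ n (x : ℝ) - (x : ℝ)| := by
    intro n
    have := le_ciSup (hbdd n) (⟨0, by norm_num⟩ : Set.Icc (0:ℝ) 1)
    exact le_trans (abs_nonneg _) this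
  exact tendsto_of_tendsto_of_tendsto_of_le_of_le tendsto_const_nhds
    tendsto_one_div_add_atTop_nhds_zero_nat h0 hle
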